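/- Let (R,m) be a Noetherian local ring of prime characteristic p and fix e ≥ 1. If there exists a surjective p^{-e}-linear map ψ : R → R, then there exists a surjective p^{-e}-linear map φ : R → R with φ(m) ⊆ m. -/

import Mathlib

/-- A `p^{-e}`-linear map on a ring `A` of characteristic `p` is an additive map
`φ : A → A` with `φ (a ^ p ^ e * x) = a * φ x` for all `a x : A`. -/
def IsPInverseLinear {A : Type*} [CommRing A] (p e : ℕ) (φ : A → A) : Prop :=
  (∀ x y : A, φ (x + y) = φ x + φ y) ∧ ∀ a x : A, φ (a ^ p ^ e * x) = a * φ x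

/-- Pigeonhole for ideal powers: if `I` is generated by a finite set `G`, then a sufficiently
high power of `I` lands in the ideal generated by the `q`-th powers of elements of `G`. -/
lemma span_pow_card_mul_le {R : Type*} [CommRing R] (q : ℕ) (G : Finset R) :
    (Ideal.span (G : Set R)) ^ (G.card * q + 1) ≤
      Ideal.span ((fun x => x ^ q) '' (G : Set R)) := by
  classical
  induction G using Finset.induction with
  | empty => simp [Ideal.span_empty]
  | @insert a s ha ih =>
      have hcard : (insert a s).card = s.card + 1 := Finset.card_insert_of_notMem ha
      have hspan : Ideal.span ((insert a s : Finset R) : Set R)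
          = Ideal.span {a} ⊔ Ideal.span (s : Set R) := by
        rw [Finset.coe_insert, Ideal.span_insert]
      have hexp : (insert a s).card * q + 1 = q + (s.card * q + 1) := by
        rw [hcard]; ring
      rw [hspan, hexp]
      refine le_trans Ideal.sup_pow_add_le_pow_sup_pow ?_
      apply sup_le
      · rw [Ideal.span_singleton_pow]
        apply Ideal.span_mono
        intro x hx
        rcases hx with rfl
        exact ⟨a, by simp, rfl⟩
      · refine le_trans ih (Ideal.span_mono ?_)
        rintro x ⟨y, hy, rfl⟩
        exact ⟨y, by simp [hy], rfl⟩

/-- Let `(R,m)` be a Noetherian local ring of prime characteristic `p` and fix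
`e ≥ 1`.  If there is a surjective `p^{-e}`-linear map `ψ : R → R`, then there is a surjective
`p^{-e}`-linear map `φ : R → R` with `φ(m) ⊆ m`. -/
theorem exists_surjective_pinverse_linear_compatible_with_maximalIdeal
    (R : Type*) [CommRing R] [IsNoetherianRing R] [IsLocalRing R]
    (p : ℕ) (hp : p.Prime) [CharP R p]
    (e : ℕ) (he : 1 ≤ e)
    (ψ : R → R) (hψ : IsPInverseLinear p e ψ) (hψsurj : Function.Surjective ψ) :
    ∃ φ : R → R, IsPInverseLinear p e φ ∧ Function.Surjective φ ∧
      ∀ x ∈ IsLocalRing.maximalIdeal R, φ x ∈ IsLocalRing.maximalIdeal R := by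
  classical
  set m : Ideal R := IsLocalRing.maximalIdeal R with hm
  set q : ℕ := p ^ e with hq
  obtain ⟨hadd, hpow⟩ := hψ
  by_contra hcon
  push_neg at hcon
  -- we can keep twisting: produce elements of arbitrarily deep powers of `m` mapping to `1`
  have key : ∀ n : ℕ, ∃ u, u ∈ m ^ n ∧ ψ u = 1 := by
    intro n
    induction n with
    | zero =>
        obtain ⟨c, hc⟩ := hψsurj 1
        exact ⟨c, by simp, hc⟩
    | succ n ih =>
        obtain ⟨u, hu, hu1⟩ := ih
        -- the twisted map
        have hφlin : IsPInverseLinear p e (fun x => ψ (u * x)) := by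
          constructor
          · intro x y
            simp only [mul_add, hadd]
          · intro a x
            have : u * (a ^ q * x) = a ^ q * (u * x) := by ring
            simp only [hq] at this ⊢
            simp only [this, hpow]
        have hφsurj : Function.Surjective (fun x => ψ (u * x)) := by
          intro b
          refine ⟨b ^ q, ?_⟩
          have : u * b ^ q = b ^ q * u := by ring
          simp only [hq] at this ⊢
          simp only [this, hpow, hu1, mul_one]
        obtain ⟨t, ht, hφt⟩ := hcon _ hφlin hφsurj
        have hv : IsUnit (ψ (u * t)) := by
          by_contra hnu
          exact hφt (IsLocalRing.mem_maximalIdeal _ |>.mpr hnu)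
        obtain ⟨w, hw⟩ := hv
        refine ⟨(↑w⁻¹ : R) ^ q * (u * t), ?_, ?_⟩
        · exact Ideal.mul_mem_left _ _ (by rw [pow_succ]; exact Ideal.mul_mem_mul hu ht)
        · rw [hpow, ← hw, Units.inv_mul]
  -- a finite generating set for the maximal ideal
  obtain ⟨G, hG⟩ := IsNoetherian.noetherian m
  have hGm : ∀ x ∈ G, x ∈ m := fun x hx => by
    rw [← hG]; exact Submodule.subset_span hx
  -- ψ maps the ideal generated by q-th powers of elements of m into m
  have hspanψ : ∀ y ∈ Ideal.span ((fun x => x ^ q) '' (G : Set R)), ψ y ∈ m := by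
    intro y hy
    rw [← Finset.coe_image] at hy
    obtain ⟨f, -, hf⟩ := Submodule.mem_span_finset.mp hy
    let Ψ : R →+ R := AddMonoidHom.mk' ψ hadd
    have hΨ : ∀ z, Ψ z = ψ z := fun z => rfl
    rw [← hf]
    have : ψ (∑ i ∈ G.image (fun x => x ^ q), f i • i)
        = ∑ i ∈ G.image (fun x => x ^ q), ψ (f i • i) := by
      rw [← hΨ, map_sum]
      exact Finset.sum_congr rfl fun i _ => hΨ _
    rw [this]
    refine Ideal.sum_mem _ fun i hi => ?_
    obtain ⟨x, hx, rfl⟩ := Finset.mem_image.mp hi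
    have : f (x ^ q) • x ^ q = x ^ q * f (x ^ q) := by
      rw [smul_eq_mul]; ring
    rw [this, hpow]
    exact Ideal.mul_mem_right _ _ (hGm x hx)
  -- derive the contradiction
  obtain ⟨u, hu, hu1⟩ := key (G.card * q + 1)
  have h1m : (1 : R) ∈ m := by
    rw [← hu1]
    apply hspanψ
    refine span_pow_card_mul_le q G ?_
    rw [show Ideal.span (G : Set R) = m from hG]
    exact hu
  exact (Ideal.ne_top_iff_one m).mp (IsLocalRing.maximalIdeal.isMaximal R).ne_top h1m
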